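/- Let g ≥ 1 and let G ≤ S_{2g} be a transitive subgroup of the hyperoctahedral group W_{2g} (permutations of {1,…,2g} preserving the pairs {2i−1,2i}). If G contains a 2-cycle, a 4-cycle, a (2g−2)-cycle, and a 2g-cycle, then G = W_{2g}. -/

import Mathlib

open Equiv Equiv.Perm

namespace HypOctAux

variable {g : ℕ}

lemma perm_apply_inv_self {α : Type*} (f : Perm α) (x : α) : f (f⁻¹ x) = x :=
  f.apply_symm_apply x

lemma perm_inv_apply_self {α : Type*} (f : Perm α) (x : α) : f⁻¹ (f x) = x :=
  f.symm_apply_apply x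

/-- block-preserving predicate -/
def pres (σ : Perm (Fin g × Bool)) : Prop :=
  ∀ x y : Fin g × Bool, x.1 = y.1 → (σ x).1 = (σ y).1

lemma eq_partner {x y : Fin g × Bool} (h1 : x.1 = y.1) (h2 : y ≠ x) :
    y = (x.1, !x.2) := by
  obtain ⟨x1, x2⟩ := x; obtain ⟨y1, y2⟩ := y
  cases x2 <;> cases y2 <;> simp_all

lemma pres_inv {σ : Perm (Fin g × Bool)} (h : pres σ) : pres σ⁻¹ := by
  intro x y hxy
  rcases eq_or_ne y x with rfl | hne
  · rfl
  · have hy : y = (x.1, !x.2) := eq_partner hxy hne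
    set a := σ⁻¹ x with ha
    have hax : σ a = x := perm_apply_inv_self σ x
    have h1 : (σ (a.1, !a.2)).1 = x.1 := by
      rw [← hax]; exact h _ _ rfl
    have h2 : σ (a.1, !a.2) ≠ x := by
      rw [← hax]; intro hc
      have := σ.injective hc
      simp [Prod.ext_iff] at this
    have h3 : σ (a.1, !a.2) = y := by
      rw [hy]; exact eq_partner h1.symm h2
    have : σ⁻¹ y = (a.1, !a.2) := by rw [← h3]; exact perm_inv_apply_self σ _
    rw [this]

/-- the induced permutation on blocks -/
def hperm (σ : Perm (Fin g × Bool)) (h : pres σ) : Perm (Fin g) where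
  toFun i := (σ (i, false)).1
  invFun i := (σ⁻¹ (i, false)).1
  left_inv i := by
    have h1 : (σ⁻¹ ((σ (i, false)).1, false)).1 = (σ⁻¹ (σ (i, false))).1 :=
      pres_inv h _ _ rfl
    simpa using h1
  right_inv i := by
    have h1 : (σ ((σ⁻¹ (i, false)).1, false)).1 = (σ (σ⁻¹ (i, false))).1 :=
      h _ _ rfl
    simpa using h1

lemma hperm_apply (σ : Perm (Fin g × Bool)) (h : pres σ) (i : Fin g) :
    hperm σ h i = (σ (i, false)).1 := rfl

lemma hperm_spec (σ : Perm (Fin g × Bool)) (h : pres σ) (x : Fin g × Bool) :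
    (σ x).1 = hperm σ h x.1 :=
  h x (x.1, false) rfl

lemma partner_mem_support {σ : Perm (Fin g × Bool)} (h : pres σ)
    {x : Fin g × Bool} (hx : x ∈ σ.support) : (x.1, !x.2) ∈ σ.support := by
  by_contra hc
  rw [Equiv.Perm.notMem_support] at hc
  have h1 : (σ x).1 = x.1 := by
    have := h x (x.1, !x.2) rfl
    rw [hc] at this; exact this
  have h2 : σ x ≠ x := Equiv.Perm.mem_support.1 hx
  have h3 : σ x = (x.1, !x.2) := eq_partner h1.symm h2
  rw [← hc] at h3
  have := σ.injective h3
  simp [Prod.ext_iff] at this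

end HypOctAux

open HypOctAux in
/-- Criterion for a subgroup of the hyperoctahedral group to be the whole group
(Lemma 2 of [dds]).  Model `{1, …, 2g}` with its pairs `{2i−1, 2i}` as
`Fin g × Bool`; `W_{2g}` is the set of permutations preserving the first
coordinate pairing.  If a transitive subgroup `G` of `W_{2g}` contains a
2-cycle, a 4-cycle, a `(2g−2)`-cycle and a `2g`-cycle, then `G = W_{2g}`. -/
theorem hyperoctahedral_criterion (g : ℕ) (hg : 1 ≤ g)
    (G : Subgroup (Equiv.Perm (Fin g × Bool)))
    (hGW : ∀ σ ∈ G, ∀ x y : Fin g × Bool, x.1 = y.1 → (σ x).1 = (σ y).1)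
    (htrans : ∀ x y : Fin g × Bool, ∃ σ ∈ G, σ x = y)
    (hcycles : ∀ ℓ ∈ ({2, 4, 2 * g - 2, 2 * g} : Finset ℕ),
      ∃ σ ∈ G, σ.IsCycle ∧ σ.support.card = ℓ) :
    ∀ σ : Equiv.Perm (Fin g × Bool),
      (∀ x y : Fin g × Bool, x.1 = y.1 → (σ x).1 = (σ y).1) → σ ∈ G := by
  classical
  have presG : ∀ σ ∈ G, pres σ := hGW
  -- the predicate "h is the block permutation of some element of G"
  set inG : Perm (Fin g) → Prop :=
    fun h => ∃ σ ∈ G, ∀ x : Fin g × Bool, (σ x).1 = h x.1 with hinG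
  have inG_one : inG 1 := ⟨1, one_mem G, fun x => rfl⟩
  have inG_mul : ∀ h k, inG h → inG k → inG (h * k) := by
    rintro h k ⟨σ, hσ, hσh⟩ ⟨τ, hτ, hτk⟩
    refine ⟨σ * τ, mul_mem hσ hτ, fun x => ?_⟩
    have h1 : (σ (τ x)).1 = h (τ x).1 := hσh (τ x)
    rw [Equiv.Perm.mul_apply, h1, hτk x, Equiv.Perm.mul_apply]
  have inG_inv : ∀ h, inG h → inG h⁻¹ := by
    rintro h ⟨σ, hσ, hσh⟩
    refine ⟨σ⁻¹, inv_mem hσ, fun x => ?_⟩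
    have h1 : (σ (σ⁻¹ x)).1 = h (σ⁻¹ x).1 := hσh (σ⁻¹ x)
    rw [perm_apply_inv_self σ] at h1
    have := congrArg (⇑h⁻¹) h1
    rw [perm_inv_apply_self] at this
    rw [this]
  have inG_hperm : ∀ (σ : Perm (Fin g × Bool)) (hσ : σ ∈ G),
      inG (hperm σ (presG σ hσ)) := by
    intro σ hσ
    exact ⟨σ, hσ, fun x => hperm_spec σ (presG σ hσ) x⟩
  -- transitivity at the block level
  have trans1 : ∀ i j : Fin g, ∃ h, inG h ∧ h i = j := by
    intro i j
    obtain ⟨σ, hσ, hσij⟩ := htrans (i, false) (j, false)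
    refine ⟨hperm σ (presG σ hσ), inG_hperm σ hσ, ?_⟩
    rw [hperm_apply, hσij]

  -- ===== analysis of the 4-cycle: it induces a transposition of blocks =====
  obtain ⟨σ4, hσ4, hc4, hs4⟩ := hcycles 4 (by simp)
  have p4 : pres σ4 := presG σ4 hσ4
  obtain ⟨a, ha⟩ : ∃ a, a ∈ σ4.support := by
    have : σ4.support.Nonempty := by rw [← Finset.card_pos, hs4]; norm_num
    exact this
  have hane : σ4 a ≠ a := Equiv.Perm.mem_support.1 ha
  set s := a.1 with hsdef
  set t := (σ4 a).1 with htdef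
  have hst : s ≠ t := by
    intro hst
    have h1 : σ4 a = (a.1, !a.2) := eq_partner hst hane
    have hPa : (a.1, !a.2) ∈ σ4.support := partner_mem_support p4 ha
    have h2 : σ4 (a.1, !a.2) = a := by
      have h3 : (σ4 (a.1, !a.2)).1 = (σ4 a).1 := p4 _ a rfl
      have hb1 : a.1 = (σ4 (a.1, !a.2)).1 := by rw [h3]; exact hst
      by_contra hz
      have h4 : σ4 (a.1, !a.2) = (a.1, !a.2) := eq_partner hb1 hz
      exact (Equiv.Perm.mem_support.1 hPa) h4
    have hsq : (σ4 ^ 2) a = a := by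
      have : (σ4 ^ 2) a = σ4 (σ4 a) := by
        simp [pow_succ, Equiv.Perm.mul_apply]
      rw [this, h1, h2]
    have hone : σ4 ^ 2 = 1 := (hc4.pow_eq_one_iff' hane).2 hsq
    have hdvd : orderOf σ4 ∣ 2 := orderOf_dvd_of_pow_eq_one hone
    rw [hc4.orderOf, hs4] at hdvd
    omega
  have hQ : σ4 a ∈ σ4.support := Equiv.Perm.apply_mem_support.2 ha
  have hPa : (a.1, !a.2) ∈ σ4.support := partner_mem_support p4 ha
  have hPQ : ((σ4 a).1, !(σ4 a).2) ∈ σ4.support := partner_mem_support p4 hQ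
  have hne1 : a ≠ (a.1, !a.2) := by simp [Prod.ext_iff]
  have hne3 : a ≠ ((σ4 a).1, !(σ4 a).2) := by
    intro h
    have h' : a.1 = (σ4 a).1 := by simpa using congrArg Prod.fst h
    exact hst h'
  have hne4 : (a.1, !a.2) ≠ σ4 a := by
    intro h
    have h' : a.1 = (σ4 a).1 := by simpa using congrArg Prod.fst h
    exact hst h'
  have hne5 : (a.1, !a.2) ≠ ((σ4 a).1, !(σ4 a).2) := by
    intro h
    have h' : a.1 = (σ4 a).1 := by simpa using congrArg Prod.fst h
    exact hst h'
  have hne6 : σ4 a ≠ ((σ4 a).1, !(σ4 a).2) := by simp [Prod.ext_iff]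
  have hcard4 : ({a, (a.1, !a.2), σ4 a, ((σ4 a).1, !(σ4 a).2)} :
      Finset (Fin g × Bool)).card = 4 := by
    rw [Finset.card_insert_of_notMem (by simp [hne1, Ne.symm hane, hne3]),
      Finset.card_insert_of_notMem (by simp [hne4, hne5]),
      Finset.card_insert_of_notMem (by simp [hne6]), Finset.card_singleton]
  have hsupp4 : ({a, (a.1, !a.2), σ4 a, ((σ4 a).1, !(σ4 a).2)} :
      Finset (Fin g × Bool)) = σ4.support := by
    apply Finset.eq_of_subset_of_card_le
    · intro x hx
      simp only [Finset.mem_insert, Finset.mem_singleton] at hx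
      rcases hx with rfl | rfl | rfl | rfl <;> assumption
    · rw [hs4, hcard4]
  have block_s : ∀ x : Fin g × Bool, x.1 = s → (σ4 x).1 = t := by
    intro x hx
    rw [htdef]
    exact p4 x a hx
  have block_t : ∀ x : Fin g × Bool, x.1 = t → (σ4 x).1 = s := by
    intro x hx
    have h1 : (σ4 x).1 = (σ4 (σ4 a)).1 := p4 x (σ4 a) hx
    have hu : σ4 (σ4 a) ∈ σ4.support := Equiv.Perm.apply_mem_support.2 hQ
    rw [← hsupp4] at hu
    simp only [Finset.mem_insert, Finset.mem_singleton] at hu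
    rcases hu with h | h | h | h
    · rw [h1, h]
    · rw [h1, h]
    · exact absurd (σ4.injective h) hane
    · exfalso
      have hw1 : (σ4 ((σ4 a).1, !(σ4 a).2)).1 = t := by
        have := p4 ((σ4 a).1, !(σ4 a).2) (σ4 a) rfl
        rw [this, h]
      have hw : σ4 ((σ4 a).1, !(σ4 a).2) ∈ σ4.support :=
        Equiv.Perm.apply_mem_support.2 hPQ
      rw [← hsupp4] at hw
      simp only [Finset.mem_insert, Finset.mem_singleton] at hw
      rcases hw with h' | h' | h' | h'
      · rw [h'] at hw1; exact hst hw1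
      · rw [h'] at hw1; exact hst (by simpa using hw1)
      · exact hne3 (σ4.injective h').symm
      · exact (Equiv.Perm.mem_support.1 hPQ) h'
  have block_o : ∀ x : Fin g × Bool, x.1 ≠ s → x.1 ≠ t → σ4 x = x := by
    intro x hx1 hx2
    by_contra hc
    have : x ∈ σ4.support := Equiv.Perm.mem_support.2 hc
    rw [← hsupp4] at this
    simp only [Finset.mem_insert, Finset.mem_singleton] at this
    rcases this with rfl | rfl | rfl | rfl
    · exact hx1 rfl
    · exact hx1 rfl
    · exact hx2 rfl
    · exact hx2 rfl
  have inG_st : inG (Equiv.swap s t) := by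
    refine ⟨σ4, hσ4, fun x => ?_⟩
    rcases eq_or_ne x.1 s with h | h
    · rw [block_s x h, h, Equiv.swap_apply_left]
    rcases eq_or_ne x.1 t with h' | h'
    · rw [block_t x h', h', Equiv.swap_apply_right]
    · rw [block_o x h h', Equiv.swap_apply_of_ne_of_ne h h']
  -- ===== analysis of the (2g-2)-cycle: point stabilizer transitivity =====
  obtain ⟨σ6, hσ6, hc6, hs6⟩ := hcycles (2 * g - 2) (by simp)
  have p6 : pres σ6 := presG σ6 hσ6
  have hcardB : Fintype.card (Fin g × Bool) = 2 * g := by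
    simp [Fintype.card_prod, mul_comm]
  obtain ⟨x0, hx0⟩ : ∃ x0, x0 ∉ σ6.support := by
    by_contra hcc
    push_neg at hcc
    have huniv : σ6.support = Finset.univ := Finset.eq_univ_iff_forall.2 hcc
    rw [huniv, Finset.card_univ, hcardB] at hs6
    omega
  set p := x0.1 with hpdef
  have hpb : ∀ b, (p, b) ∉ σ6.support := by
    intro b hb
    rcases eq_or_ne b x0.2 with rfl | hbne
    · exact hx0 (by rwa [hpdef, Prod.mk.eta] at hb)
    · have h1 : ((p : Fin g), !b) ∈ σ6.support := partner_mem_support p6 hb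
      have hx2 : x0.2 = !b := by
        cases hbb : x0.2 <;> cases hcc : b
        · exact absurd (hcc.trans hbb.symm) hbne
        · decide
        · decide
        · exact absurd (hcc.trans hbb.symm) hbne
      have h2 : ((p : Fin g), !b) = x0 := by
        rw [hpdef, ← hx2]
      rw [h2] at h1
      exact hx0 h1
  have hmemS : ∀ x : Fin g × Bool, x.1 ≠ p → x ∈ σ6.support := by
    intro x hx
    by_contra hcc
    have hcompl : (σ6.supportᶜ : Finset (Fin g × Bool)).card = 2 := by
      rw [Finset.card_compl, hs6, hcardB]
      omega
    have hd1 : ((p : Fin g), false) ≠ ((p : Fin g), true) := by simp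
    have hd2 : ((p : Fin g), false) ≠ x := fun h => hx (congrArg Prod.fst h).symm
    have hd3 : ((p : Fin g), true) ≠ x := fun h => hx (congrArg Prod.fst h).symm
    have hsub : ({((p : Fin g), false), ((p : Fin g), true), x} :
        Finset (Fin g × Bool)) ⊆ σ6.supportᶜ := by
      intro z hz
      simp only [Finset.mem_insert, Finset.mem_singleton] at hz
      rcases hz with rfl | rfl | rfl <;> rw [Finset.mem_compl]
      · exact hpb false
      · exact hpb true
      · exact hcc
    have h3 : ({((p : Fin g), false), ((p : Fin g), true), x} :
        Finset (Fin g × Bool)).card = 3 := by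
      rw [Finset.card_insert_of_notMem (by simp [hd1, hd2]),
        Finset.card_insert_of_notMem (by simp [hd3]), Finset.card_singleton]
    have := Finset.card_le_card hsub
    rw [h3, hcompl] at this
    omega
  have stab : ∀ x y : Fin g, x ≠ p → y ≠ p → ∃ h, inG h ∧ h p = p ∧ h x = y := by
    intro x y hx hy
    have hxs : (x, false) ∈ σ6.support := hmemS _ hx
    have hys : (y, false) ∈ σ6.support := hmemS _ hy
    obtain ⟨m, hm⟩ := hc6.exists_pow_eq (Equiv.Perm.mem_support.1 hxs)
      (Equiv.Perm.mem_support.1 hys)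
    have hσm : σ6 ^ m ∈ G := pow_mem hσ6 m
    refine ⟨hperm (σ6 ^ m) (presG _ hσm), inG_hperm _ hσm, ?_, ?_⟩
    · rw [hperm_apply]
      have hfix : (σ6 ^ m) ((p : Fin g), false) = ((p : Fin g), false) :=
        Equiv.Perm.pow_apply_eq_self_of_apply_eq_self
          (Equiv.Perm.notMem_support.1 (hpb false)) m
      rw [hfix]
    · rw [hperm_apply, hm]
  -- ===== 2-transitivity at the block level =====
  have trans2 : ∀ a1 b1 u v : Fin g, a1 ≠ b1 → u ≠ v →
      ∃ h, inG h ∧ h a1 = u ∧ h b1 = v := by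
    intro a1 b1 u v hab huv
    obtain ⟨h1, h1G, h1a⟩ := trans1 a1 u
    by_cases hbv : h1 b1 = v
    · exact ⟨h1, h1G, h1a, hbv⟩
    · have hb1u : h1 b1 ≠ u := fun e => hab ((h1.injective (e.trans h1a.symm)).symm)
      obtain ⟨h2, h2G, h2u⟩ := trans1 u p
      have hx : h2 (h1 b1) ≠ p := fun e => hb1u (h2.injective (e.trans h2u.symm))
      have hy : h2 v ≠ p := fun e => huv ((h2.injective (e.trans h2u.symm)).symm)
      obtain ⟨h3, h3G, h3p, h3x⟩ := stab (h2 (h1 b1)) (h2 v) hx hy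
      refine ⟨h2⁻¹ * (h3 * (h2 * h1)),
        inG_mul _ _ (inG_inv _ h2G) (inG_mul _ _ h3G (inG_mul _ _ h2G h1G)),
        ?_, ?_⟩
      · simp only [Equiv.Perm.mul_apply]
        rw [h1a, h2u, h3p, ← h2u, perm_inv_apply_self]
      · simp only [Equiv.Perm.mul_apply]
        rw [h3x, perm_inv_apply_self]
  have inG_swap : ∀ u v : Fin g, u ≠ v → inG (Equiv.swap u v) := by
    intro u v huv
    obtain ⟨h, hG, hs', ht'⟩ := trans2 s t u v hst huv
    have heq : Equiv.swap u v = h * Equiv.swap s t * h⁻¹ := by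
      rw [← hs', ← ht']
      exact Equiv.swap_apply_apply h s t
    rw [heq]
    exact inG_mul _ _ (inG_mul _ _ hG inG_st) (inG_inv _ hG)
  have inG_all : ∀ h : Perm (Fin g), inG h := fun h =>
    Equiv.Perm.swap_induction_on h inG_one
      (fun f x y hxy ih => inG_mul _ _ (inG_swap x y hxy) ih)
  -- ===== the 2-cycle gives a flip, and transitivity gives all flips =====
  obtain ⟨σ2, hσ2, hc2, hs2⟩ := hcycles 2 (by simp)
  obtain ⟨a2, b2, hab2, hσ2eq⟩ := Equiv.Perm.card_support_eq_two.1 hs2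
  have hb2 : b2 = (a2.1, !a2.2) := by
    rcases eq_or_ne a2.1 b2.1 with h | h
    · exact eq_partner h (Ne.symm hab2)
    · exfalso
      have h1 : σ2 a2 = b2 := by rw [hσ2eq]; exact Equiv.swap_apply_left _ _
      have h2 : σ2 (a2.1, !a2.2) = (a2.1, !a2.2) := by
        rw [hσ2eq]
        apply Equiv.swap_apply_of_ne_of_ne
        · simp [Prod.ext_iff]
        · intro hcq
          exact h (by rw [← hcq])
      have h3 := presG σ2 hσ2 a2 (a2.1, !a2.2) rfl
      rw [h1, h2] at h3
      exact h (by simpa using h3.symm)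
  have flipex : ∃ c : Fin g, Equiv.swap (c, false) (c, true) ∈ G := by
    refine ⟨a2.1, ?_⟩
    have hmem : Equiv.swap a2 (a2.1, !a2.2) ∈ G := by rw [← hb2, ← hσ2eq]; exact hσ2
    obtain ⟨c, b⟩ := a2
    cases b
    · simpa using hmem
    · rw [Equiv.swap_comm]; simpa using hmem
  have flips : ∀ i : Fin g, Equiv.swap (i, false) (i, true) ∈ G := by
    obtain ⟨c, hcmem⟩ := flipex
    intro i
    obtain ⟨τ, hτ, hτc⟩ := htrans (c, false) (i, false)
    have h1 : (i : Fin g) = (τ (c, true)).1 := by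
      have := presG τ hτ (c, true) (c, false) rfl
      rw [hτc] at this
      exact this.symm
    have h2 : τ (c, true) = ((i : Fin g), true) := by
      have hne : τ (c, true) ≠ ((i : Fin g), false) := by
        rw [← hτc]
        intro hcq
        have := τ.injective hcq
        simp at this
      have := eq_partner (x := ((i : Fin g), false)) h1 hne
      simpa using this
    have hmem : Equiv.swap (τ (c, false)) (τ (c, true)) ∈ G := by
      rw [Equiv.swap_apply_apply]
      exact mul_mem (mul_mem hτ hcmem) (inv_mem hτ)
    rw [hτc, h2] at hmem
    exact hmem
  -- ===== block-fixing elements are in G =====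
  have blockfix : ∀ (n : ℕ) (δ : Perm (Fin g × Bool)), (∀ x, (δ x).1 = x.1) →
      (Finset.univ.filter (fun i => δ (i, false) ≠ (i, false))).card = n → δ ∈ G := by
    intro n
    induction n with
    | zero =>
      intro δ hδ h0
      have hall : ∀ i : Fin g, δ (i, false) = (i, false) := by
        intro i
        by_contra hcq
        have hmem : i ∈ Finset.univ.filter (fun i => δ (i, false) ≠ (i, false)) :=
          Finset.mem_filter.2 ⟨Finset.mem_univ _, hcq⟩
        rw [Finset.card_eq_zero] at h0
        rw [h0] at hmem
        simp at hmem
      have hone : δ = 1 := by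
        apply Equiv.ext
        rintro ⟨i, b⟩
        cases b
        · simpa using hall i
        · have h1 : (i : Fin g) = (δ (i, true)).1 := (hδ (i, true)).symm
          have h2 : δ (i, true) ≠ ((i : Fin g), false) := by
            rw [← hall i]
            intro hcq
            have := δ.injective hcq
            simp at this
          have := eq_partner (x := ((i : Fin g), false)) h1 h2
          simpa using this
      rw [hone]
      exact one_mem G
    | succ n ih =>
      intro δ hδ hcard
      obtain ⟨j, hj⟩ : ∃ j, j ∈ Finset.univ.filter
          (fun i => δ (i, false) ≠ (i, false)) := by
        have : (Finset.univ.filter (fun i => δ (i, false) ≠ (i, false))).Nonempty := by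
          rw [← Finset.card_pos, hcard]; omega
        exact this
      have hjne : δ (j, false) ≠ ((j : Fin g), false) := (Finset.mem_filter.1 hj).2
      have hj1 : δ (j, false) = ((j : Fin g), true) := by
        have := eq_partner (x := ((j : Fin g), false)) (hδ ((j : Fin g), false)).symm hjne
        simpa using this
      have hj2 : δ (j, true) = ((j : Fin g), false) := by
        have hco : (j : Fin g) = (δ (j, true)).1 := (hδ (j, true)).symm
        have hne : δ (j, true) ≠ ((j : Fin g), true) := by
          rw [← hj1]
          intro hcq
          have := δ.injective hcq
          exact hjne this
        have := eq_partner (x := ((j : Fin g), true)) hco hne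
        simpa using this
      set f := Equiv.swap ((j : Fin g), false) ((j : Fin g), true) with hf
      have hfpres : ∀ x : Fin g × Bool, (f x).1 = x.1 := by
        intro x
        rcases eq_or_ne x ((j : Fin g), false) with rfl | hx1
        · rw [hf, Equiv.swap_apply_left]
        rcases eq_or_ne x ((j : Fin g), true) with rfl | hx2
        · rw [hf, Equiv.swap_apply_right]
        · rw [hf, Equiv.swap_apply_of_ne_of_ne hx1 hx2]
      have hδ' : ∀ x, ((δ * f) x).1 = x.1 := fun x => by
        rw [Equiv.Perm.mul_apply, hδ, hfpres]
      have hset : Finset.univ.filter (fun i => (δ * f) (i, false) ≠ (i, false))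
          = (Finset.univ.filter (fun i => δ (i, false) ≠ (i, false))).erase j := by
        ext i
        simp only [Finset.mem_filter, Finset.mem_erase, Finset.mem_univ, true_and]
        by_cases hij : i = j
        · subst hij
          have : (δ * f) ((i : Fin g), false) = ((i : Fin g), false) := by
            rw [Equiv.Perm.mul_apply, hf, Equiv.swap_apply_left, hj2]
          simp [this]
        · have hfi : f ((i : Fin g), false) = ((i : Fin g), false) := by
            rw [hf]
            apply Equiv.swap_apply_of_ne_of_ne <;> simp [hij]
          rw [Equiv.Perm.mul_apply, hfi]
          simp [hij]
      have hmemδ' : δ * f ∈ G := by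
        apply ih _ hδ'
        rw [hset, Finset.card_erase_of_mem hj, hcard]
        omega
      have hδeq : δ = (δ * f) * f := by
        rw [mul_assoc, hf]
        simp [Equiv.swap_mul_self]
      rw [hδeq]
      exact mul_mem hmemδ' (flips j)
  -- ===== conclusion =====
  intro σ hσpres
  obtain ⟨τ, hτG, hτ⟩ := inG_all (hperm σ hσpres)
  have hτσ : ∀ z, (τ z).1 = (σ z).1 := by
    intro z
    rw [hτ z, ← hperm_spec σ hσpres z]
  have hδ : ∀ x, ((σ * τ⁻¹) x).1 = x.1 := by
    intro x
    rw [Equiv.Perm.mul_apply, ← hτσ (τ⁻¹ x), perm_apply_inv_self]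
  have hδG : σ * τ⁻¹ ∈ G := blockfix _ _ hδ rfl
  have hfin : σ = (σ * τ⁻¹) * τ := by
    rw [mul_assoc]
    simp
  rw [hfin]
  exact mul_mem hδG hτG
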